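/- The number of permutations σ of {0,1,…,n−1} such that σ(i) ≠ i and σ(i) ≠ i+1 (mod n) for all i equals ∑_{r=0}^{n} (−1)^r · (2n/(2n−r)) · C(2n−r, r) · (n−r)!, for n ≥ 2. -/

import Mathlib

open Finset Nat



lemma card_extensions {α : Type*} [Fintype α] [DecidableEq α] (A : Finset (α × α))
    (h1 : Set.InjOn Prod.fst (A : Set (α × α))) (h2 : Set.InjOn Prod.snd (A : Set (α × α))) :
    (Finset.univ.filter (fun σ : Equiv.Perm α => ∀ p ∈ A, σ p.1 = p.2)).card
      = (Fintype.card α - A.card)! := by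
  classical
  set dom := A.image Prod.fst with hdom
  set ran := A.image Prod.snd with hran
  have hcd : dom.card = A.card := Finset.card_image_of_injOn h1
  have hcr : ran.card = A.card := Finset.card_image_of_injOn h2
  have hex : ∀ x ∈ dom, ∃! p, p ∈ A ∧ p.1 = x := by
    intro x hx
    obtain ⟨p, hp, hpx⟩ := Finset.mem_image.1 hx
    refine ⟨p, ⟨hp, hpx⟩, ?_⟩
    rintro q ⟨hq, hqx⟩
    exact h1 hq hp (by rw [hqx, hpx])
  -- the bijection dom → ran induced by A
  let f : {x // x ∈ dom} → {y // y ∈ ran} := fun x =>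
    ⟨(A.choose _ (hex x.1 x.2)).2, Finset.mem_image.2 ⟨_, (A.choose_spec _ (hex x.1 x.2)).1, rfl⟩⟩
  have hfA : ∀ p (hp : p ∈ A), (f ⟨p.1, Finset.mem_image.2 ⟨p, hp, rfl⟩⟩ : α) = p.2 := by
    intro p hp
    have hu := hex p.1 (Finset.mem_image.2 ⟨p, hp, rfl⟩)
    have hmem : p.1 ∈ dom := Finset.mem_image.2 ⟨p, hp, rfl⟩
    have := hu.unique (A.choose_spec _ (hex p.1 hmem)) ⟨hp, rfl⟩
    simp [f, this]
  have hfinj : Function.Injective f := by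
    rintro ⟨x, hx⟩ ⟨y, hy⟩ hxy
    have h1x := A.choose_spec _ (hex x hx)
    have h1y := A.choose_spec _ (hex y hy)
    have : (A.choose _ (hex x hx)) = (A.choose _ (hex y hy)) :=
      h2 (h1x.1) (h1y.1) (by simpa [f] using hxy)
    simp only [Subtype.ext_iff]
    rw [← h1x.2, ← h1y.2, this]
  have hcards : Fintype.card {x // x ∈ dom} = Fintype.card {y // y ∈ ran} := by
    simp [Fintype.card_coe, hcd, hcr]
  have hcompl : Fintype.card {x // x ∉ dom} = Fintype.card {y // y ∉ ran} := by
    simp [Fintype.card_subtype_compl, hcards]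
  have hfbij : Function.Bijective f :=
    (Fintype.bijective_iff_injective_and_card f).2 ⟨hfinj, hcards⟩
  let e : {x // x ∈ dom} ≃ {y // y ∈ ran} := Equiv.ofBijective f hfbij
  -- extension map
  let Φ : ({x // x ∉ dom} ≃ {y // y ∉ ran}) → Equiv.Perm α := fun τ =>
    (Equiv.sumCompl (· ∈ dom)).symm.trans ((e.sumCongr τ).trans (Equiv.sumCompl (· ∈ ran)))
  have hΦpos : ∀ τ x (hx : x ∈ dom), Φ τ x = (e ⟨x, hx⟩ : α) := by
    intro τ x hx
    simp [Φ, Equiv.sumCompl_symm_apply_of_pos hx]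
  have hΦneg : ∀ τ x (hx : x ∉ dom), Φ τ x = (τ ⟨x, hx⟩ : α) := by
    intro τ x hx
    simp [Φ, Equiv.sumCompl_symm_apply_of_neg hx]
  have hΦext : ∀ τ, ∀ p ∈ A, Φ τ p.1 = p.2 := by
    intro τ p hp
    rw [hΦpos τ p.1 (Finset.mem_image.2 ⟨p, hp, rfl⟩)]
    exact hfA p hp
  let Ψ : ({x // x ∉ dom} ≃ {y // y ∉ ran}) → {σ : Equiv.Perm α // ∀ p ∈ A, σ p.1 = p.2} :=
    fun τ => ⟨Φ τ, hΦext τ⟩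
  have hΨinj : Function.Injective Ψ := by
    intro τ₁ τ₂ h
    ext x
    have := congrArg (fun σ : {σ : Equiv.Perm α // ∀ p ∈ A, σ p.1 = p.2} => (σ : Equiv.Perm α) x.1) h
    simpa [Ψ, hΦneg τ₁ x.1 x.2, hΦneg τ₂ x.1 x.2, Subtype.ext_iff] using this
  have hΨsurj : Function.Surjective Ψ := by
    rintro ⟨σ, hσ⟩
    -- σ maps dom to ran following e
    have hσdom : ∀ x (hx : x ∈ dom), σ x = (e ⟨x, hx⟩ : α) := by
      intro x hx
      obtain ⟨p, hp, hpx⟩ := Finset.mem_image.1 hx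
      subst hpx
      rw [hσ p hp]
      exact (hfA p hp).symm
    have hσnotran : ∀ x, x ∉ dom → σ x ∉ ran := by
      intro x hx hmem
      obtain ⟨y, hy⟩ := hfbij.2 ⟨σ x, hmem⟩
      have : σ y.1 = σ x := by
        rw [hσdom y.1 y.2]; exact congrArg Subtype.val hy
      exact hx (σ.injective this ▸ y.2)
    let g : {x // x ∉ dom} → {y // y ∉ ran} := fun x => ⟨σ x, hσnotran x.1 x.2⟩
    have hginj : Function.Injective g := by
      rintro ⟨x, hx⟩ ⟨y, hy⟩ hxy
      have : σ x = σ y := by simpa [g, Subtype.ext_iff] using hxy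
      simp [Subtype.ext_iff, σ.injective this]
    have hgbij : Function.Bijective g :=
      (Fintype.bijective_iff_injective_and_card g).2 ⟨hginj, hcompl⟩
    refine ⟨Equiv.ofBijective g hgbij, ?_⟩
    apply Subtype.ext
    apply Equiv.ext
    intro x
    by_cases hx : x ∈ dom
    · rw [show (Ψ (Equiv.ofBijective g hgbij) : Equiv.Perm α) = Φ _ from rfl,
        hΦpos _ x hx, hσdom x hx]
    · rw [show (Ψ (Equiv.ofBijective g hgbij) : Equiv.Perm α) = Φ _ from rfl,
        hΦneg _ x hx]
      rfl
  have hcard : (Finset.univ.filter (fun σ : Equiv.Perm α => ∀ p ∈ A, σ p.1 = p.2)).card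
      = Fintype.card ({x // x ∉ dom} ≃ {y // y ∉ ran}) := by
    rw [← Fintype.card_subtype]
    exact (Fintype.card_of_bijective ⟨hΨinj, hΨsurj⟩).symm
  rw [hcard, Fintype.card_equiv (Fintype.equivOfCardEq hcompl), Fintype.card_subtype_compl]
  congr 2
  simp [Fintype.card_coe, hcd]


lemma linCount : ∀ m r : ℕ,
    (((Finset.range m).powersetCard r).filter (fun T => ∀ x ∈ T, x + 1 ∉ T)).card
      = (m + 1 - r).choose r := by
  intro m
  induction m using Nat.strong_induction_on with
  | _ m ih =>
    intro r
    match m, r with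
    | m, 0 =>
      rw [Finset.powersetCard_zero]
      rw [Finset.filter_singleton]
      simp
    | 0, (r+1) =>
      rw [Nat.choose_eq_zero_of_lt (by omega : 0 + 1 - (r+1) < r + 1),
        Finset.powersetCard_eq_empty.2 (by simp)]
      simp
    | 1, 1 =>
      rw [show (((Finset.range 1).powersetCard 1).filter
          (fun T => ∀ x ∈ T, x + 1 ∉ T)).card = 1 from by decide]
      decide
    | 1, (r+2) =>
      rw [Finset.powersetCard_eq_empty.2 (by simp)]
      simp [Nat.choose_eq_zero_of_lt (by omega : 1 + 1 - (r+2) < r + 2)]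
    | (M+2), (r+1) =>
      have key := Finset.card_filter_add_card_filter_not
        (s := ((Finset.range (M+2)).powersetCard (r+1)).filter (fun T => ∀ x ∈ T, x + 1 ∉ T))
        (p := fun T => M + 1 ∈ T)
      -- part without M+1
      have hA : ((((Finset.range (M+2)).powersetCard (r+1)).filter
            (fun T => ∀ x ∈ T, x + 1 ∉ T)).filter (fun T => ¬ (M + 1 ∈ T)))
          = (((Finset.range (M+1)).powersetCard (r+1)).filter (fun T => ∀ x ∈ T, x + 1 ∉ T)) := by
        ext T
        simp only [Finset.mem_filter, Finset.mem_powersetCard]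
        constructor
        · rintro ⟨⟨⟨hsub, hcard⟩, hcond⟩, hnm⟩
          refine ⟨⟨?_, hcard⟩, hcond⟩
          intro x hx
          have := hsub hx
          simp only [Finset.mem_range] at this ⊢
          rcases Nat.lt_succ_iff_lt_or_eq.1 this with h | h
          · exact h
          · exact absurd (h ▸ hx) hnm
        · rintro ⟨⟨hsub, hcard⟩, hcond⟩
          refine ⟨⟨⟨fun x hx => ?_, hcard⟩, hcond⟩, fun hmem => ?_⟩
          · have := hsub hx; simp only [Finset.mem_range] at this ⊢; omega
          · have := hsub hmem; simp at this
      -- part with M+1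
      have hB : ((((Finset.range (M+2)).powersetCard (r+1)).filter
            (fun T => ∀ x ∈ T, x + 1 ∉ T)).filter (fun T => M + 1 ∈ T)).card
          = (((Finset.range M).powersetCard r).filter (fun T => ∀ x ∈ T, x + 1 ∉ T)).card := by
        apply Finset.card_bij (fun T _ => T.erase (M+1))
        · rintro T hT
          simp only [Finset.mem_filter, Finset.mem_powersetCard] at hT ⊢
          obtain ⟨⟨⟨hsub, hcard⟩, hcond⟩, hmem⟩ := hT
          refine ⟨⟨fun x hx => ?_, ?_⟩, fun x hx => fun hc => hcond x (Finset.mem_of_mem_erase hx) (Finset.mem_of_mem_erase hc)⟩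
          · obtain ⟨hne, hxT⟩ := Finset.mem_erase.1 hx
            have h1 := hsub hxT
            simp only [Finset.mem_range] at h1 ⊢
            have : x ≠ M := by
              intro h; subst h
              exact hcond x hxT (by simpa using hmem)
            omega
          · rw [Finset.card_erase_of_mem hmem, hcard]
            omega
        · intro T₁ h₁ T₂ h₂ he
          simp only [Finset.mem_filter] at h₁ h₂
          rw [← Finset.insert_erase h₁.2, ← Finset.insert_erase h₂.2, he]
        · intro T' hT'
          simp only [Finset.mem_filter, Finset.mem_powersetCard] at hT'
          obtain ⟨⟨hsub, hcard⟩, hcond⟩ := hT'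
          have hnm : M + 1 ∉ T' := fun h => by have := hsub h; simp at this
          refine ⟨insert (M+1) T', ?_, by rw [Finset.erase_insert hnm]⟩
          simp only [Finset.mem_filter, Finset.mem_powersetCard]
          refine ⟨⟨⟨?_, ?_⟩, ?_⟩, Finset.mem_insert_self _ _⟩
          · intro x hx
            rcases Finset.mem_insert.1 hx with h | h
            · simp [h]
            · have := hsub h; simp only [Finset.mem_range] at this ⊢; omega
          · rw [Finset.card_insert_of_notMem hnm, hcard]
          · intro x hx hc
            rcases Finset.mem_insert.1 hx with h | h
            · subst h
              rcases Finset.mem_insert.1 hc with h' | h'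
              · omega
              · have := hsub h'; simp at this; omega
            · rcases Finset.mem_insert.1 hc with h' | h'
              · have := hsub h; simp at this; omega
              · exact hcond x h h'
      rw [← key, hA, hB, ih (M+1) (by omega) (r+1), ih M (by omega) r]
      rcases le_or_gt r (M+1) with h | h
      · have h1 : M + 2 + 1 - (r+1) = (M + 1 + 1 - (r + 1)) + 1 := by omega
        have h2 : M + 1 - r = M + 1 + 1 - (r + 1) := by omega
        rw [h1, h2, Nat.choose_succ_succ']
      · rw [Nat.choose_eq_zero_of_lt (by omega), Nat.choose_eq_zero_of_lt (by omega),
          Nat.choose_eq_zero_of_lt (by omega)]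

lemma linCountIco (a m r : ℕ) :
    (((Finset.Ico a (a+m)).powersetCard r).filter (fun T => ∀ x ∈ T, x + 1 ∉ T)).card
      = (m + 1 - r).choose r := by
  rw [← linCount m r]
  have himg : ∀ T : Finset ℕ, T ⊆ Finset.Ico a (a+m) → (T.image (fun x => x - a)).image (fun y => y + a) = T := by
    intro T hsub
    ext y
    simp only [Finset.mem_image]
    constructor
    · rintro ⟨z, ⟨x, hx, rfl⟩, rfl⟩
      have := Finset.mem_Ico.1 (hsub hx)
      have : x - a + a = x := by omega
      rwa [this]
    · intro hy
      have := Finset.mem_Ico.1 (hsub hy)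
      exact ⟨y - a, ⟨y, hy, rfl⟩, by omega⟩
  apply Finset.card_bij (fun T _ => T.image (fun x => x - a))
  · intro T hT
    simp only [Finset.mem_filter, Finset.mem_powersetCard] at hT ⊢
    obtain ⟨⟨hsub, hcard⟩, hcond⟩ := hT
    have hge : ∀ x ∈ T, a ≤ x ∧ x < a + m := fun x hx => Finset.mem_Ico.1 (hsub hx)
    refine ⟨⟨?_, ?_⟩, ?_⟩
    · intro y hy
      obtain ⟨x, hx, rfl⟩ := Finset.mem_image.1 hy
      have := hge x hx
      simp only [Finset.mem_range]
      omega
    · rw [Finset.card_image_of_injOn, hcard]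
      intro x hx y hy hxy
      have h1 := hge x hx; have h2 := hge y hy
      have hxy' : x - a = y - a := hxy
      omega
    · intro y hy hc
      obtain ⟨x, hx, rfl⟩ := Finset.mem_image.1 hy
      obtain ⟨z, hz, hz2⟩ := Finset.mem_image.1 hc
      have h1 := hge x hx; have h2 := hge z hz
      have : z = x + 1 := by omega
      exact hcond x hx (this ▸ hz)
  · intro T₁ h₁ T₂ h₂ he
    simp only [Finset.mem_filter, Finset.mem_powersetCard] at h₁ h₂
    rw [← himg T₁ h₁.1.1, ← himg T₂ h₂.1.1, he]
  · intro T' hT'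
    simp only [Finset.mem_filter, Finset.mem_powersetCard] at hT'
    obtain ⟨⟨hsub, hcard⟩, hcond⟩ := hT'
    refine ⟨T'.image (fun y => y + a), ?_, ?_⟩
    · simp only [Finset.mem_filter, Finset.mem_powersetCard]
      refine ⟨⟨?_, ?_⟩, ?_⟩
      · intro x hx
        obtain ⟨y, hy, rfl⟩ := Finset.mem_image.1 hx
        have := Finset.mem_range.1 (hsub hy)
        simp only [Finset.mem_Ico]
        omega
      · rw [Finset.card_image_of_injective _ (fun x y h => by omega), hcard]
      · intro x hx hc
        obtain ⟨y, hy, rfl⟩ := Finset.mem_image.1 hx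
        obtain ⟨z, hz, hz2⟩ := Finset.mem_image.1 hc
        have : z = y + 1 := by omega
        exact hcond y hy (this ▸ hz)
    · ext x
      simp only [Finset.mem_image]
      constructor
      · rintro ⟨z, ⟨y, hy, rfl⟩, rfl⟩
        simpa using hy
      · intro hx
        have := Finset.mem_range.1 (hsub hx)
        exact ⟨x + a, ⟨x, hx, rfl⟩, by omega⟩

lemma cycCount (m r : ℕ) (hm : 3 ≤ m) (hr : 1 ≤ r) :
    (((Finset.range m).powersetCard r).filter (fun T => ∀ x ∈ T, (x + 1) % m ∉ T)).card
      = (m - r).choose r + (m - r - 1).choose (r - 1) := by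
  have key := Finset.card_filter_add_card_filter_not
    (s := ((Finset.range m).powersetCard r).filter (fun T => ∀ x ∈ T, (x + 1) % m ∉ T))
    (p := fun T => 0 ∈ T)
  -- class without 0
  have hA : ((((Finset.range m).powersetCard r).filter
        (fun T => ∀ x ∈ T, (x + 1) % m ∉ T)).filter (fun T => ¬ (0 ∈ T)))
      = (((Finset.Ico 1 (1+(m-1))).powersetCard r).filter (fun T => ∀ x ∈ T, x + 1 ∉ T)) := by
    ext T
    simp only [Finset.mem_filter, Finset.mem_powersetCard]
    constructor
    · rintro ⟨⟨⟨hsub, hcard⟩, hcond⟩, h0⟩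
      have hsub' : T ⊆ Finset.Ico 1 (1+(m-1)) := by
        intro x hx
        have := Finset.mem_range.1 (hsub hx)
        simp only [Finset.mem_Ico]
        have : x ≠ 0 := fun h => h0 (h ▸ hx)
        omega
      refine ⟨⟨hsub', hcard⟩, fun x hx hc => ?_⟩
      have hxm := Finset.mem_Ico.1 (hsub' hx)
      have hcm := Finset.mem_Ico.1 (hsub' hc)
      have : (x + 1) % m = x + 1 := Nat.mod_eq_of_lt (by omega)
      exact hcond x hx (by rwa [this])
    · rintro ⟨⟨hsub, hcard⟩, hcond⟩
      have h0 : 0 ∉ T := fun h => by have := Finset.mem_Ico.1 (hsub h); omega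
      refine ⟨⟨⟨fun x hx => ?_, hcard⟩, fun x hx hc => ?_⟩, h0⟩
      · have := Finset.mem_Ico.1 (hsub hx); simp only [Finset.mem_range]; omega
      · have hxm := Finset.mem_Ico.1 (hsub hx)
        have hcm := Finset.mem_Ico.1 (hsub hc)
        rcases Nat.lt_or_ge (x+1) m with h | h
        · rw [Nat.mod_eq_of_lt h] at hc
          exact hcond x hx hc
        · have : x = m - 1 := by omega
          subst this
          have : (m - 1 + 1) % m = 0 := by
            rw [show m - 1 + 1 = m by omega, Nat.mod_self]
          rw [this] at hc
          exact h0 hc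
  -- class with 0
  have hB : ((((Finset.range m).powersetCard r).filter
        (fun T => ∀ x ∈ T, (x + 1) % m ∉ T)).filter (fun T => 0 ∈ T)).card
      = (((Finset.Ico 2 (2+(m-3))).powersetCard (r-1)).filter (fun T => ∀ x ∈ T, x + 1 ∉ T)).card := by
    apply Finset.card_bij (fun T _ => T.erase 0)
    · intro T hT
      simp only [Finset.mem_filter, Finset.mem_powersetCard] at hT ⊢
      obtain ⟨⟨⟨hsub, hcard⟩, hcond⟩, h0⟩ := hT
      have h1 : 1 ∉ T := by
        have := hcond 0 h0
        rwa [Nat.mod_eq_of_lt (by omega)] at this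
      have hm1 : m - 1 ∉ T := by
        intro hmem
        have := hcond (m-1) hmem
        rw [show m - 1 + 1 = m by omega, Nat.mod_self] at this
        exact this h0
      refine ⟨⟨?_, ?_⟩, ?_⟩
      · intro x hx
        obtain ⟨hne, hxT⟩ := Finset.mem_erase.1 hx
        have hxr := Finset.mem_range.1 (hsub hxT)
        have : x ≠ 1 := fun h => h1 (h ▸ hxT)
        have : x ≠ m - 1 := fun h => hm1 (h ▸ hxT)
        simp only [Finset.mem_Ico]
        omega
      · rw [Finset.card_erase_of_mem h0, hcard]
      · intro x hx hc
        obtain ⟨hne, hxT⟩ := Finset.mem_erase.1 hx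
        obtain ⟨_, hcT⟩ := Finset.mem_erase.1 hc
        have hxr := Finset.mem_range.1 (hsub hxT)
        have : x ≠ m - 1 := fun h => hm1 (h ▸ hxT)
        have hmod : (x + 1) % m = x + 1 := Nat.mod_eq_of_lt (by omega)
        exact hcond x hxT (by rwa [hmod])
    · intro T₁ h₁ T₂ h₂ he
      simp only [Finset.mem_filter] at h₁ h₂
      rw [← Finset.insert_erase h₁.2, ← Finset.insert_erase h₂.2, he]
    · intro T' hT'
      simp only [Finset.mem_filter, Finset.mem_powersetCard] at hT'
      obtain ⟨⟨hsub, hcard⟩, hcond⟩ := hT'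
      have hbd : ∀ x ∈ T', 2 ≤ x ∧ x < m - 1 := by
        intro x hx
        have := Finset.mem_Ico.1 (hsub hx)
        omega
      have h0 : 0 ∉ T' := fun h => by have := hbd 0 h; omega
      refine ⟨insert 0 T', ?_, by rw [Finset.erase_insert h0]⟩
      simp only [Finset.mem_filter, Finset.mem_powersetCard]
      refine ⟨⟨⟨?_, ?_⟩, ?_⟩, Finset.mem_insert_self _ _⟩
      · intro x hx
        rcases Finset.mem_insert.1 hx with h | h
        · simp only [Finset.mem_range]; omega
        · have := hbd x h; simp only [Finset.mem_range]; omega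
      · rw [Finset.card_insert_of_notMem h0, hcard]; omega
      · intro x hx hc
        rcases Finset.mem_insert.1 hx with h | h
        · subst h
          rw [Nat.mod_eq_of_lt (by omega)] at hc
          rcases Finset.mem_insert.1 hc with h' | h'
          · omega
          · have := hbd 1 h'; omega
        · have hb := hbd x h
          rw [Nat.mod_eq_of_lt (by omega)] at hc
          rcases Finset.mem_insert.1 hc with h' | h'
          · omega
          · exact hcond x h h'
  rw [← key, hB, hA, linCountIco, linCountIco]
  have e1 : m - 1 + 1 - r = m - r := by omega
  have e2 : m - 3 + 1 - (r - 1) = m - r - 1 := by omega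
  rw [e1, e2]
  omega


lemma castEqAux (n x y : ℕ) (hn : 0 < n) (hx : x ≤ n) (hy : y ≤ n) :
    ((x : ZMod n) = (y : ZMod n)) ↔ (x = y ∨ (x = n ∧ y = 0) ∨ (x = 0 ∧ y = n)) := by
  rw [ZMod.natCast_eq_natCast_iff]
  unfold Nat.ModEq
  have hxm : x % n = if x = n then 0 else x := by
    split_ifs with h
    · rw [h]; exact Nat.mod_self _
    · exact Nat.mod_eq_of_lt (by omega)
  have hym : y % n = if y = n then 0 else y := by
    split_ifs with h
    · rw [h]; exact Nat.mod_self _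
    · exact Nat.mod_eq_of_lt (by omega)
  rw [hxm, hym]
  split_ifs <;> omega

def tcell (n k : ℕ) : ZMod n × ZMod n :=
  (((k / 2 : ℕ) : ZMod n), ((k / 2 + k % 2 : ℕ) : ZMod n))

lemma tcell_conflict {n : ℕ} (hn : 2 ≤ n) {j k : ℕ} (hj : j < 2 * n) (hk : k < 2 * n)
    (hjk : j ≠ k) :
    ((tcell n j).1 = (tcell n k).1 ∨ (tcell n j).2 = (tcell n k).2) ↔
      ((j + 1) % (2 * n) = k ∨ (k + 1) % (2 * n) = j) := by
  have hn0 : 0 < n := by omega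
  simp only [tcell]
  rw [castEqAux n _ _ hn0 (by omega) (by omega), castEqAux n _ _ hn0 (by omega) (by omega)]
  have hjm : (j + 1) % (2 * n) = if j + 1 = 2 * n then 0 else j + 1 := by
    split_ifs with h
    · rw [h, Nat.mod_self]
    · exact Nat.mod_eq_of_lt (by omega)
  have hkm : (k + 1) % (2 * n) = if k + 1 = 2 * n then 0 else k + 1 := by
    split_ifs with h
    · rw [h, Nat.mod_self]
    · exact Nat.mod_eq_of_lt (by omega)
  rw [hjm, hkm]
  split_ifs <;> omega

lemma tcell_injOn {n : ℕ} (hn : 2 ≤ n) {j k : ℕ} (hj : j < 2 * n) (hk : k < 2 * n)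
    (h : tcell n j = tcell n k) : j = k := by
  have hn0 : 0 < n := by omega
  have h1 := congrArg Prod.fst h
  have h2 := congrArg Prod.snd h
  simp only [tcell] at h1 h2
  rw [castEqAux n _ _ hn0 (by omega) (by omega)] at h1
  rw [castEqAux n _ _ hn0 (by omega) (by omega)] at h2
  omega

lemma mem_tcell_image {n : ℕ} (hn : 2 ≤ n) (p : ZMod n × ZMod n) :
    p ∈ (Finset.range (2 * n)).image (tcell n) ↔ (p.2 = p.1 ∨ p.2 = p.1 + 1) := by
  have : NeZero n := ⟨by omega⟩
  constructor
  · intro hp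
    obtain ⟨k, hk, rfl⟩ := Finset.mem_image.1 hp
    simp only [tcell]
    rcases Nat.even_or_odd k with he | ho
    · left
      have hk2 := Nat.even_iff.1 he
      congr 1
      omega
    · right
      have hk2 := Nat.odd_iff.1 ho
      have : k / 2 + k % 2 = k / 2 + 1 := by omega
      rw [this]
      push_cast
      ring
  · intro hp
    set a := p.1.val with ha
    have hav : a < n := p.1.val_lt
    have hcast : ((a : ℕ) : ZMod n) = p.1 := ZMod.natCast_rightInverse p.1
    rcases hp with h | h
    · refine Finset.mem_image.2 ⟨2 * a, Finset.mem_range.2 (by omega), ?_⟩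
      simp only [tcell]
      have e1 : 2 * a / 2 = a := by omega
      have e2 : 2 * a % 2 = 0 := by omega
      rw [e1, e2]
      ext
      · simp [hcast]
      · simp [hcast, h]
    · refine Finset.mem_image.2 ⟨2 * a + 1, Finset.mem_range.2 (by omega), ?_⟩
      simp only [tcell]
      have e1 : (2 * a + 1) / 2 = a := by omega
      have e2 : (2 * a + 1) % 2 = 1 := by omega
      rw [e1, e2]
      ext
      · simp [hcast]
      · push_cast
        simp [hcast, h]

theorem touchard_menage (n : ℕ) (hn : 2 ≤ n) :
    (Nat.card {σ : Equiv.Perm (ZMod n) // ∀ i, σ i ≠ i ∧ σ i ≠ i + 1} : ℚ) =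
      ∑ r ∈ Finset.range (n + 1),
        (-1 : ℚ) ^ r * (2 * n / ((2 * n : ℚ) - r)) * Nat.choose (2 * n - r) r *
          Nat.factorial (n - r) := by
  classical
  haveI : NeZero n := ⟨by omega⟩
  have hcardZ : Fintype.card (ZMod n) = n := ZMod.card n
  set S : Finset (ZMod n × ZMod n) := (Finset.range (2 * n)).image (tcell n) with hS
  set compat : Finset (ZMod n × ZMod n) → Prop :=
    fun A => (∀ p ∈ A, ∀ q ∈ A, p.1 = q.1 → p = q) ∧ (∀ p ∈ A, ∀ q ∈ A, p.2 = q.2 → p = q)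
    with hcompat
  set Gr : Equiv.Perm (ZMod n) → Finset (ZMod n × ZMod n) :=
    fun σ => Finset.univ.image (fun i => (i, σ i)) with hGr
  -- Step 0 : LHS as a filter card
  have hN : (Nat.card {σ : Equiv.Perm (ZMod n) // ∀ i, σ i ≠ i ∧ σ i ≠ i + 1} : ℚ)
      = ((Finset.univ.filter
          (fun σ : Equiv.Perm (ZMod n) => ∀ i, σ i ≠ i ∧ σ i ≠ i + 1)).card : ℚ) := by
    rw [Nat.card_eq_fintype_card, Fintype.card_subtype]
  -- Step 1 : inclusion-exclusion
  have step1 : ∀ A ∈ S.powerset,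
      (if compat A then (-1 : ℚ) ^ A.card * ((n - A.card)! : ℚ) else 0)
        = ∑ σ : Equiv.Perm (ZMod n),
            (if (compat A ∧ ∀ p ∈ A, σ p.1 = p.2) then (-1 : ℚ) ^ A.card else 0) := by
    intro A _
    by_cases h : compat A
    · rw [if_pos h]
      have hext := card_extensions A
        (fun p hp q hq hpq => h.1 p (Finset.mem_coe.1 hp) q (Finset.mem_coe.1 hq) hpq)
        (fun p hp q hq hpq => h.2 p (Finset.mem_coe.1 hp) q (Finset.mem_coe.1 hq) hpq)
      rw [hcardZ] at hext
      rw [← hext]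
      have : ∀ σ : Equiv.Perm (ZMod n),
          (if (compat A ∧ ∀ p ∈ A, σ p.1 = p.2) then (-1 : ℚ) ^ A.card else 0)
            = (if (∀ p ∈ A, σ p.1 = p.2) then (-1 : ℚ) ^ A.card else 0) := by
        intro σ; exact if_congr (and_iff_right h) rfl rfl
      rw [Finset.sum_congr rfl (fun σ _ => this σ), ← Finset.sum_filter,
        Finset.sum_const, nsmul_eq_mul]
      ring
    · rw [if_neg h]
      symm
      apply Finset.sum_eq_zero
      intro σ _
      rw [if_neg (fun hc => h hc.1)]
  have step2 : ∀ σ : Equiv.Perm (ZMod n),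
      S.powerset.filter (fun A => compat A ∧ ∀ p ∈ A, σ p.1 = p.2)
        = (S ∩ Gr σ).powerset := by
    intro σ
    ext A
    simp only [Finset.mem_filter, Finset.mem_powerset]
    constructor
    · rintro ⟨hsub, _, hext⟩
      intro p hp
      refine Finset.mem_inter.2 ⟨hsub hp, ?_⟩
      exact Finset.mem_image.2 ⟨p.1, Finset.mem_univ _, by rw [hext p hp]⟩
    · intro hsub
      have hgr : ∀ p ∈ A, σ p.1 = p.2 := by
        intro p hp
        have := (Finset.mem_inter.1 (hsub hp)).2
        obtain ⟨i, _, hi⟩ := Finset.mem_image.1 this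
        rw [← hi]
      refine ⟨fun p hp => (Finset.mem_inter.1 (hsub hp)).1, ⟨?_, ?_⟩, hgr⟩
      · intro p hp q hq hpq
        have e1 := hgr p hp; have e2 := hgr q hq
        exact Prod.ext hpq (by rw [← e1, ← e2, hpq])
      · intro p hp q hq hpq
        have e1 := hgr p hp; have e2 := hgr q hq
        have : σ p.1 = σ q.1 := by rw [e1, e2, hpq]
        exact Prod.ext (σ.injective this) hpq
  have step3 : ∀ σ : Equiv.Perm (ZMod n),
      (∑ A ∈ (S ∩ Gr σ).powerset, (-1 : ℚ) ^ A.card)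
        = if S ∩ Gr σ = ∅ then (1 : ℚ) else 0 := by
    intro σ
    have hZ := Finset.sum_powerset_neg_one_pow_card (x := S ∩ Gr σ)
    have : ((∑ A ∈ (S ∩ Gr σ).powerset, (-1 : ℤ) ^ A.card : ℤ) : ℚ)
        = ∑ A ∈ (S ∩ Gr σ).powerset, (-1 : ℚ) ^ A.card := by push_cast; rfl
    rw [← this, hZ]
    split_ifs <;> simp
  have step4 : ∀ σ : Equiv.Perm (ZMod n),
      (S ∩ Gr σ = ∅) ↔ (∀ i, σ i ≠ i ∧ σ i ≠ i + 1) := by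
    intro σ
    rw [Finset.eq_empty_iff_forall_notMem]
    constructor
    · intro h i
      constructor
      · intro he
        exact h (i, σ i) (Finset.mem_inter.2
          ⟨(mem_tcell_image hn (i, σ i)).2 (Or.inl he),
           Finset.mem_image.2 ⟨i, Finset.mem_univ _, rfl⟩⟩)
      · intro he
        exact h (i, σ i) (Finset.mem_inter.2
          ⟨(mem_tcell_image hn (i, σ i)).2 (Or.inr he),
           Finset.mem_image.2 ⟨i, Finset.mem_univ _, rfl⟩⟩)
    · intro h p hp
      obtain ⟨hpS, hpG⟩ := Finset.mem_inter.1 hp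
      obtain ⟨i, _, hi⟩ := Finset.mem_image.1 hpG
      subst hi
      rcases (mem_tcell_image hn (i, σ i)).1 hpS with he | he
      · exact (h i).1 he
      · exact (h i).2 he
  -- combine inclusion-exclusion
  have IE : ((Finset.univ.filter
        (fun σ : Equiv.Perm (ZMod n) => ∀ i, σ i ≠ i ∧ σ i ≠ i + 1)).card : ℚ)
      = ∑ A ∈ S.powerset.filter compat, (-1 : ℚ) ^ A.card * ((n - A.card)! : ℚ) := by
    rw [Finset.sum_filter, Finset.sum_congr rfl step1, Finset.sum_comm]
    have : ∀ σ : Equiv.Perm (ZMod n),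
        (∑ A ∈ S.powerset,
          if (compat A ∧ ∀ p ∈ A, σ p.1 = p.2) then (-1 : ℚ) ^ A.card else 0)
          = if (∀ i, σ i ≠ i ∧ σ i ≠ i + 1) then (1 : ℚ) else 0 := by
      intro σ
      rw [← Finset.sum_filter, step2 σ, step3 σ]
      simp only [step4 σ]
    rw [Finset.sum_congr rfl (fun σ _ => this σ), ← Finset.sum_filter]
    simp
  -- Step 2 : group by cardinality
  have hmaps : ∀ A ∈ S.powerset.filter compat, A.card ∈ Finset.range (n + 1) := by
    intro A hA
    simp only [Finset.mem_filter, Finset.mem_powerset] at hA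
    have hcA : A.card = (A.image Prod.fst).card := (Finset.card_image_of_injOn
      (fun p hp q hq h => hA.2.1 p (Finset.mem_coe.1 hp) q (Finset.mem_coe.1 hq) h)).symm
    have hle := Finset.card_le_univ (A.image Prod.fst)
    rw [hcardZ] at hle
    rw [Finset.mem_range]
    omega
  have grouped : ∑ A ∈ S.powerset.filter compat, (-1 : ℚ) ^ A.card * ((n - A.card)! : ℚ)
      = ∑ r ∈ Finset.range (n + 1),
          (((S.powerset.filter compat).filter (fun A => A.card = r)).card : ℚ)
            * ((-1 : ℚ) ^ r * ((n - r)! : ℚ)) := by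
    rw [← Finset.sum_fiberwise_of_maps_to hmaps]
    apply Finset.sum_congr rfl
    intro r _
    have : ∀ A ∈ (S.powerset.filter compat).filter (fun A => A.card = r),
        (-1 : ℚ) ^ A.card * ((n - A.card)! : ℚ) = (-1 : ℚ) ^ r * ((n - r)! : ℚ) := by
      intro A hA
      rw [(Finset.mem_filter.1 hA).2]
    rw [Finset.sum_congr rfl this, Finset.sum_const, nsmul_eq_mul]
  -- Step 3 : count compatible subsets of each size
  have hcnt : ∀ r ∈ Finset.range (n + 1),
      ((S.powerset.filter compat).filter (fun A => A.card = r)).card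
        = if r = 0 then 1 else ((2 * n - r).choose r + (2 * n - r - 1).choose (r - 1)) := by
    intro r hr
    rcases Nat.eq_zero_or_pos r with rfl | hrpos
    · rw [if_pos rfl]
      have : (S.powerset.filter compat).filter (fun A => A.card = 0) = {∅} := by
        ext A
        simp only [Finset.mem_filter, Finset.mem_powerset, Finset.mem_singleton,
          Finset.card_eq_zero]
        constructor
        · rintro ⟨_, h⟩; exact h
        · rintro rfl
          exact ⟨⟨Finset.empty_subset _,
            ⟨fun p hp => absurd hp (Finset.notMem_empty _),
             fun p hp => absurd hp (Finset.notMem_empty _)⟩⟩, rfl⟩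
      rw [this, Finset.card_singleton]
    · rw [if_neg (by omega), ← cycCount (2 * n) r (by omega) hrpos]
      symm
      apply Finset.card_bij (fun T _ => T.image (tcell n))
      · intro T hT
        simp only [Finset.mem_filter, Finset.mem_powersetCard] at hT
        obtain ⟨⟨hsub, hcard⟩, hcond⟩ := hT
        have hbd : ∀ x ∈ T, x < 2 * n := fun x hx => Finset.mem_range.1 (hsub hx)
        simp only [Finset.mem_filter, Finset.mem_powerset]
        have hinj : Set.InjOn (tcell n) T := fun a ha b hb h =>
          tcell_injOn hn (hbd a (Finset.mem_coe.1 ha)) (hbd b (Finset.mem_coe.1 hb)) h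
        refine ⟨⟨?_, ?_, ?_⟩, ?_⟩
        · intro p hp
          obtain ⟨k, hk, rfl⟩ := Finset.mem_image.1 hp
          exact Finset.mem_image.2 ⟨k, Finset.mem_range.2 (hbd k hk), rfl⟩
        · intro p hp q hq h
          obtain ⟨j, hj, rfl⟩ := Finset.mem_image.1 hp
          obtain ⟨k, hk, rfl⟩ := Finset.mem_image.1 hq
          by_cases hjk : j = k
          · rw [hjk]
          · exfalso
            rcases (tcell_conflict hn (hbd j hj) (hbd k hk) hjk).1 (Or.inl h) with ha | ha
            · exact hcond j hj (ha ▸ hk)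
            · exact hcond k hk (ha ▸ hj)
        · intro p hp q hq h
          obtain ⟨j, hj, rfl⟩ := Finset.mem_image.1 hp
          obtain ⟨k, hk, rfl⟩ := Finset.mem_image.1 hq
          by_cases hjk : j = k
          · rw [hjk]
          · exfalso
            rcases (tcell_conflict hn (hbd j hj) (hbd k hk) hjk).1 (Or.inr h) with ha | ha
            · exact hcond j hj (ha ▸ hk)
            · exact hcond k hk (ha ▸ hj)
        · rw [Finset.card_image_of_injOn hinj, hcard]
      · intro T₁ h₁ T₂ h₂ he
        simp only [Finset.mem_filter, Finset.mem_powersetCard] at h₁ h₂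
        ext x
        by_cases hx : x < 2 * n
        · constructor
          · intro hxT
            have : tcell n x ∈ T₂.image (tcell n) := he ▸ Finset.mem_image_of_mem _ hxT
            obtain ⟨y, hy, hyx⟩ := Finset.mem_image.1 this
            rwa [← tcell_injOn hn (Finset.mem_range.1 (h₂.1.1 hy)) hx hyx]
          · intro hxT
            have : tcell n x ∈ T₁.image (tcell n) := he ▸ Finset.mem_image_of_mem _ hxT
            obtain ⟨y, hy, hyx⟩ := Finset.mem_image.1 this
            rwa [← tcell_injOn hn (Finset.mem_range.1 (h₁.1.1 hy)) hx hyx]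
        · constructor
          · intro hxT
            exact absurd (Finset.mem_range.1 (h₁.1.1 hxT)) hx
          · intro hxT
            exact absurd (Finset.mem_range.1 (h₂.1.1 hxT)) hx
      · intro A hA
        simp only [Finset.mem_filter, Finset.mem_powerset] at hA
        obtain ⟨⟨hsubS, hc1, hc2⟩, hcard⟩ := hA
        set T : Finset ℕ := (Finset.range (2 * n)).filter (fun k => tcell n k ∈ A) with hT
        have hbd : ∀ x ∈ T, x < 2 * n ∧ tcell n x ∈ A := by
          intro x hx
          obtain ⟨h1, h2⟩ := Finset.mem_filter.1 hx
          exact ⟨Finset.mem_range.1 h1, h2⟩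
        have himg : T.image (tcell n) = A := by
          apply Finset.Subset.antisymm
          · intro p hp
            obtain ⟨k, hk, rfl⟩ := Finset.mem_image.1 hp
            exact (hbd k hk).2
          · intro p hp
            obtain ⟨k, hk, hkp⟩ := Finset.mem_image.1 (hsubS hp)
            exact Finset.mem_image.2 ⟨k, Finset.mem_filter.2 ⟨hk, hkp ▸ hp⟩, hkp⟩
        have hinj : Set.InjOn (tcell n) T := fun a ha b hb h =>
          tcell_injOn hn (hbd a (Finset.mem_coe.1 ha)).1 (hbd b (Finset.mem_coe.1 hb)).1 h
        refine ⟨T, ?_, himg⟩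
        simp only [Finset.mem_filter, Finset.mem_powersetCard]
        refine ⟨⟨Finset.filter_subset _ _, ?_⟩, ?_⟩
        · rw [← hcard, ← himg, Finset.card_image_of_injOn hinj]
        · intro x hx hy
          obtain ⟨hx1, hx2⟩ := hbd x hx
          obtain ⟨hy1, hy2⟩ := hbd _ hy
          have hxy : x ≠ (x + 1) % (2 * n) := by
            rcases Nat.lt_or_ge (x + 1) (2 * n) with h | h
            · rw [Nat.mod_eq_of_lt h]; omega
            · rw [show x + 1 = 2 * n by omega, Nat.mod_self]; omega
          rcases (tcell_conflict hn hx1 hy1 hxy).2 (Or.inl rfl) with ha | ha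
          · exact hxy (hinj (Finset.mem_coe.2 hx) (Finset.mem_coe.2 hy)
              (hc1 _ hx2 _ hy2 ha))
          · exact hxy (hinj (Finset.mem_coe.2 hx) (Finset.mem_coe.2 hy)
              (hc2 _ hx2 _ hy2 ha))
  -- Step 4 : final arithmetic
  rw [hN, IE, grouped]
  apply Finset.sum_congr rfl
  intro r hr
  have hrn : r ≤ n := by
    have := Finset.mem_range.1 hr
    omega
  rw [hcnt r hr]
  have h2n : ((2 * n : ℕ) : ℚ) ≠ 0 := by
    have : (0 : ℚ) < ((2 * n : ℕ) : ℚ) := by exact_mod_cast (by omega : 0 < 2 * n)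
    linarith
  have hkey : ((if r = 0 then 1
        else ((2 * n - r).choose r + (2 * n - r - 1).choose (r - 1)) : ℕ) : ℚ)
      = 2 * n / ((2 * n : ℚ) - r) * ((2 * n - r).choose r : ℚ) := by
    rcases Nat.eq_zero_or_pos r with rfl | hrpos
    · rw [if_pos rfl]
      have hnn : (0 : ℚ) < (n : ℚ) := by exact_mod_cast (show 0 < n by omega)
      simp only [Nat.cast_zero, sub_zero, Nat.sub_zero, Nat.choose_zero_right, Nat.cast_one,
        mul_one]
      rw [div_self (by linarith)]
    · rw [if_neg (by omega)]
      have hr2n : r ≤ 2 * n := by omega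
      have hne : ((2 * n : ℚ) - r) ≠ 0 := by
        have : (r : ℚ) < 2 * n := by exact_mod_cast (by omega : r < 2 * n)
        linarith
      have hsubcast : ((2 * n : ℚ) - r) = (((2 * n - r : ℕ)) : ℚ) := by
        rw [Nat.cast_sub hr2n]
        push_cast
        ring
      rw [div_mul_eq_mul_div, eq_div_iff hne, hsubcast]
      have key := Nat.add_one_mul_choose_eq (2 * n - r - 1) (r - 1)
      rw [show 2 * n - r - 1 + 1 = 2 * n - r by omega,
        show r - 1 + 1 = r by omega] at key
      -- key : (2*n - r) * (2*n - r - 1).choose (r - 1) = (2*n - r).choose r * r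
      have natkey : ((2 * n - r).choose r + (2 * n - r - 1).choose (r - 1)) * (2 * n - r)
          = 2 * n * ((2 * n - r).choose r) := by
        set C1 := (2 * n - r).choose r
        set C2 := (2 * n - r - 1).choose (r - 1)
        set d := 2 * n - r with hd
        have hdr : d + r = 2 * n := by omega
        calc (C1 + C2) * d = C1 * d + d * C2 := by ring
          _ = C1 * d + C1 * r := by rw [key]
          _ = C1 * (d + r) := by ring
          _ = 2 * n * C1 := by rw [hdr]; ring
      exact_mod_cast natkey
  rw [hkey]
  ring
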